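/- For every integer k ≥ 2, one has ( (k²+3k)/(k²+3k+2) )^{k−1} ≤ (k+2)³ / ( (k+1)(k+3)² ). -/

import Mathlib

lemma aux_pow_bound (n : ℕ) (t : ℝ) (h0 : 0 ≤ t) (h1 : t ≤ 1) :
    (1 - t) ^ n * (1 + n * t) ≤ 1 := by
  have h2 : (1 : ℝ) + n * t ≤ (1 + t) ^ n := one_add_mul_le_pow (by linarith) n
  calc (1 - t) ^ n * (1 + n * t) ≤ (1 - t) ^ n * (1 + t) ^ n :=
        mul_le_mul_of_nonneg_left h2 (pow_nonneg (by linarith) n)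
    _ = ((1 - t) * (1 + t)) ^ n := (mul_pow _ _ _).symm
    _ ≤ 1 := pow_le_one₀ (by nlinarith) (by nlinarith)

/-- For every integer `k ≥ 2`,
`((k²+3k)/(k²+3k+2))^(k−1) ≤ (k+2)³ / ((k+1)(k+3)²)`. -/
theorem ratio_pow_bound (k : ℕ) (hk : 2 ≤ k) :
    (((k : ℝ) ^ 2 + 3 * (k : ℝ)) / ((k : ℝ) ^ 2 + 3 * (k : ℝ) + 2)) ^ (k - 1)
      ≤ ((k : ℝ) + 2) ^ 3 / (((k : ℝ) + 1) * ((k : ℝ) + 3) ^ 2) := by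
  obtain ⟨m, rfl⟩ : ∃ m, k = m + 2 := ⟨k - 2, by omega⟩
  rcases Nat.eq_zero_or_pos m with hm | hm
  · subst hm; norm_num
  · have hx : (1 : ℝ) ≤ (m : ℝ) := by exact_mod_cast hm
    have hsub : m + 2 - 1 = m + 1 := by omega
    rw [hsub]
    push_cast
    set x := (m : ℝ) with hxdef
    have h34 : (0 : ℝ) < (x + 3) * (x + 4) := by nlinarith
    set t : ℝ := 2 / ((x + 3) * (x + 4)) with ht
    have ht0 : 0 ≤ t := by positivity
    have ht1 : t ≤ 1 := by rw [ht, div_le_one h34]; nlinarith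
    have key := aux_pow_bound (m + 1) t ht0 ht1
    push_cast at key
    have hbase : ((x + 2) ^ 2 + 3 * (x + 2)) / ((x + 2) ^ 2 + 3 * (x + 2) + 2)
        = 1 - t := by
      rw [ht]
      rw [eq_sub_iff_add_eq]
      field_simp
      ring
    rw [hbase]
    have heq : (x + 2) * (x + 7) = (1 + (x + 1) * t) * ((x + 3) * (x + 4)) := by
      rw [ht]; field_simp; ring
    have h27 : (0 : ℝ) < (x + 2) * (x + 7) := by nlinarith
    have hLHS : (1 - t) ^ (m + 1) ≤ (x + 3) * (x + 4) / ((x + 2) * (x + 7)) := by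
      rw [le_div_iff₀ h27, heq, ← mul_assoc]
      nlinarith [key, h34]
    have hfrac : (x + 3) * (x + 4) / ((x + 2) * (x + 7))
        ≤ (x + 4) ^ 3 / ((x + 3) * (x + 5) ^ 2) := by
      rw [div_le_div_iff₀ h27 (by nlinarith)]
      nlinarith [sq_nonneg x, sq_nonneg (x + 8), hx]
    have hfin := hLHS.trans hfrac
    convert hfin using 2
    · rfl
    · ring
    · ring
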